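/- Let d ≥ 2 and let n_1 ≥ n_2 ≥ n_3 ≥ n_4 ≥ 0 be integers with n_1+n_2+n_3+n_4 = 2d−4. Then the coefficient of q^d in the power series (1 − 4q)·(1 − 2q·F(q))·U_{n_1}·U_{n_2}·U_{n_3}·U_{n_4} ∈ ℚ[[q]] equals: 6 if n_1 = n_2 = n_3 = n_4; 4 if n_1 = n_2 ≠ n_3 = n_4; 2 if n_1 + n_4 = n_2 + n_3 and n_1 ≠ n_2; −2 if n_1 = n_2 + n_3 + n_4 + 2; and 0 otherwise. (This is the generating-function form, via the dictionary of Lemma 4.11, of Lemma 4.13: ∫_{Gr(2,d+1)} σ_{n_1}σ_{n_2}σ_{n_3}σ_{n_4}(8σ_{11} − 2σ_1²) equals the displayed case values; here (1−4q)(1−2q·F(q)) is the power-series form of (1−4q)^{3/2} and U_{n_i} = s_{n_i}(α,β).) -/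

import Mathlib

/-- The generating function `F(q) = Σ_{n≥0} C_n q^n ∈ ℚ[[q]]` of the Catalan numbers. -/
noncomputable def catalanGF : PowerSeries ℚ := PowerSeries.mk fun n => (catalan n : ℚ)

/-- `U n ∈ ℚ[q]`: `U 0 = U 1 = 1`, `U (n+2) = U (n+1) − q·U n`;
equivalently `U n = (α^{n+1} − β^{n+1})/(α − β)` where `α, β` are the roots of `t² − t + q`. -/
noncomputable def U : ℕ → Polynomial ℚ
  | 0 => 1
  | 1 => 1
  | (n + 2) => U (n + 1) - Polynomial.X * U n

open PowerSeries Finset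

/-! ### The Catalan generating function and the roots `α = qF`, `β = 1 − qF` of `t² − t + q` -/

lemma hF : catalanGF = 1 + X * catalanGF ^ 2 := by
  ext n
  cases n with
  | zero => simp [catalanGF]
  | succ n =>
    rw [map_add, coeff_succ_X_mul]
    simp only [catalanGF, coeff_mk, pow_two, coeff_mul, coeff_mk]
    rw [catalan_succ' n]
    push_cast
    simp [coeff_one]

noncomputable def Al : PowerSeries ℚ := X * catalanGF
noncomputable def Be : PowerSeries ℚ := 1 - X * catalanGF
noncomputable def Ss : PowerSeries ℚ := 1 - 2 * X * catalanGF

lemma hXF2 : X * catalanGF ^ 2 = catalanGF - 1 := by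
  conv_rhs => rw [hF]; ring_nf

lemma hAl2 : Al ^ 2 = Al - X := by
  simp only [Al]
  linear_combination X * hXF2

lemma hBA : Be = 1 - Al := by simp only [Al, Be]

lemma hBe2 : Be ^ 2 = Be - X := by rw [hBA]; linear_combination hAl2

lemma hS : Ss = Be - Al := by simp only [Ss, Be, Al]; ring

lemma hab : Al * Be = X := by rw [hBA]; linear_combination -hAl2

lemma habsum : Al + Be = 1 := by rw [hBA]; ring

lemma hS2 : Ss ^ 2 = 1 - 4 * X := by
  rw [hS]
  linear_combination hAl2 + hBe2 - 2 * hab + habsum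

lemma hAlpow (n : ℕ) : Al ^ (n + 2) = Al ^ (n + 1) - X * Al ^ n := by
  have h : Al ^ (n+2) = Al ^ n * Al ^ 2 := by ring
  rw [h, hAl2]; ring

lemma hBepow (n : ℕ) : Be ^ (n + 2) = Be ^ (n + 1) - X * Be ^ n := by
  have h : Be ^ (n+2) = Be ^ n * Be ^ 2 := by ring
  rw [h, hBe2]; ring

lemma coeff_Al_pow (n e : ℕ) (h : e < n) : coeff e (Al ^ n) = 0 := by
  have hdvd : (X : PowerSeries ℚ) ^ n ∣ Al ^ n := pow_dvd_pow_of_dvd ⟨catalanGF, rfl⟩ n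
  rw [X_pow_dvd_iff] at hdvd
  exact hdvd e h

/-! ### `U` and the Lucas-type companion polynomials `V`, as power series -/

noncomputable def Up (n : ℕ) : PowerSeries ℚ := (U n : Polynomial ℚ)

lemma Updef (n : ℕ) : ((U n : Polynomial ℚ) : PowerSeries ℚ) = Up n := rfl

lemma Up0 : Up 0 = 1 := by simp [Up, U]
lemma Up1 : Up 1 = 1 := by simp [Up, U]
lemma UpS (n : ℕ) : Up (n + 2) = Up (n + 1) - X * Up n := by
  simp only [Up]
  show ((U (n+1) - Polynomial.X * U n : Polynomial ℚ) : PowerSeries ℚ) = _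
  push_cast [Polynomial.coe_sub, Polynomial.coe_mul, Polynomial.coe_X]
  ring

noncomputable def V : ℕ → Polynomial ℚ
  | 0 => 2
  | 1 => 1
  | (n + 2) => V (n + 1) - Polynomial.X * V n

noncomputable def Vp (n : ℕ) : PowerSeries ℚ := (V n : Polynomial ℚ)

lemma Vp0 : Vp 0 = 2 := by
  have h : (V 0 : Polynomial ℚ) = 1 + 1 := by norm_num [V]
  simp only [Vp, h, Polynomial.coe_add, Polynomial.coe_one]
  norm_num

lemma Vp1 : Vp 1 = 1 := by simp [Vp, V]

lemma VpS (n : ℕ) : Vp (n + 2) = Vp (n + 1) - X * Vp n := by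
  simp only [Vp]
  show ((V (n+1) - Polynomial.X * V n : Polynomial ℚ) : PowerSeries ℚ) = _
  push_cast [Polynomial.coe_sub, Polynomial.coe_mul, Polynomial.coe_X]
  ring

lemma Vdeg : ∀ n, (V n).natDegree ≤ n / 2 := by
  have key : ∀ n, (V n).natDegree ≤ n / 2 ∧ (V (n+1)).natDegree ≤ (n+1) / 2 := by
    intro n
    induction n with
    | zero => constructor <;> simp [V, Polynomial.natDegree_ofNat]
    | succ n ih =>
      refine ⟨ih.2, ?_⟩
      show (V (n+2)).natDegree ≤ (n+2)/2
      have h : V (n+2) = V (n+1) - Polynomial.X * V n := by rw [V]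
      rw [h]
      apply le_trans (Polynomial.natDegree_sub_le _ _)
      rw [max_le_iff]
      refine ⟨le_trans ih.2 (by omega), ?_⟩
      apply le_trans (Polynomial.natDegree_mul_le)
      have := ih.1
      simp only [Polynomial.natDegree_X]
      omega
  exact fun n => (key n).1

lemma coeff_Vp (n e : ℕ) (h : n < 2 * e) : coeff e (Vp n) = 0 := by
  simp only [Vp, Polynomial.coeff_coe]
  apply Polynomial.coeff_eq_zero_of_natDegree_lt
  have := Vdeg n
  omega

/-! ### `S·U_n = β^{n+1} − α^{n+1}` and consequences -/

lemma SUp : ∀ n, Ss * Up n = Be ^ (n+1) - Al ^ (n+1) := by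
  have key : ∀ n, Ss * Up n = Be ^ (n+1) - Al ^ (n+1) ∧
      Ss * Up (n+1) = Be ^ (n+2) - Al ^ (n+2) := by
    intro n
    induction n with
    | zero =>
      constructor
      · rw [Up0, hS]; simp [pow_one]
      · rw [Up1, hS]
        have h1 : Be ^ (0+2) = Be ^ 2 := by norm_num
        have h2 : Al ^ (0+2) = Al ^ 2 := by norm_num
        rw [h1, h2, hAl2, hBe2]; ring
    | succ n ih =>
      refine ⟨ih.2, ?_⟩
      rw [UpS, hBepow (n+1), hAlpow (n+1)]
      linear_combination ih.2 - X * ih.1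
  exact fun n => (key n).1

lemma VpAB : ∀ n, (Al ^ n + Be ^ n) = Vp n := by
  have key : ∀ n, (Al ^ n + Be ^ n = Vp n) ∧ (Al ^ (n+1) + Be ^ (n+1) = Vp (n+1)) := by
    intro n
    induction n with
    | zero => exact ⟨by rw [Vp0]; norm_num, by rw [Vp1]; simpa [pow_one] using habsum⟩
    | succ n ih =>
      refine ⟨ih.2, ?_⟩
      rw [VpS, hBepow, hAlpow]
      linear_combination ih.2 - X * ih.1
  exact fun n => (key n).1

lemma Up2 : Up 2 = 1 - X := by simpa [Up0, Up1] using UpS 0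
lemma Up3 : Up 3 = 1 - 2*X := by have := UpS 1; simp [Up1, Up2] at this; rw [this]; ring
lemma Up4 : Up 4 = 1 - 3*X + X^2 := by
  have := UpS 2; simp at this; rw [this, Up3, Up2]; ring
lemma Up5 : Up 5 = 1 - 4*X + 3*X^2 := by
  have := UpS 3; simp at this; rw [this, Up4, Up3]; ring

lemma Urec4 : ∀ n, (1 - 4*X) * Up (n+2) = Up (n+4) - 2*X*Up (n+2) + X^2 * Up n := by
  have key : ∀ n, ((1 - 4*X) * Up (n+2) = Up (n+4) - 2*X*Up (n+2) + X^2 * Up n) ∧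
      ((1 - 4*X) * Up (n+3) = Up (n+5) - 2*X*Up (n+3) + X^2 * Up (n+1)) := by
    intro n
    induction n with
    | zero =>
      constructor
      · show (1 - 4*X) * Up 2 = Up 4 - 2*X*Up 2 + X^2 * Up 0
        rw [Up2, Up4, Up0]; ring
      · show (1 - 4*X) * Up 3 = Up 5 - 2*X*Up 3 + X^2 * Up 1
        rw [Up3, Up5, Up1]; ring
    | succ n ih =>
      refine ⟨ih.2, ?_⟩
      show (1 - 4*X) * Up (n+4) = Up (n+6) - 2*X*Up (n+4) + X^2 * Up (n+2)
      have r0 : Up (n+2) = Up (n+1) - X * Up n := UpS n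
      have r1 : Up (n+4) = Up (n+3) - X * Up (n+2) := UpS (n+2)
      have r2 : Up (n+6) = Up (n+5) - X * Up (n+4) := UpS (n+4)
      linear_combination ih.2 - X * ih.1 + (1-2*X) * r1 - r2 - X^2 * r0
  exact fun n => (key n).1

/-! ### Coefficient computations -/

lemma coeffC_mul (a : ℚ) (f : PowerSeries ℚ) (n : ℕ) :
    coeff n ((C a) * f) = a * coeff n f := coeff_C_mul n f a

lemma coeffSs (n : ℕ) : coeff (n+1) Ss = -2 * catalan n := by
  simp only [Ss, map_sub, coeff_one]
  rw [show (2 : PowerSeries ℚ) * X * catalanGF = X * (C 2 * catalanGF) from by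
    rw [map_ofNat]; ring, coeff_succ_X_mul, coeffC_mul]
  simp [catalanGF]

lemma wlem (m : ℕ) : coeff (m+2) (Ss * Up (2*m+2)) = 0 := by
  rw [SUp]
  have hBe : Be ^ (2*m+2+1) = Vp (2*m+3) - Al ^ (2*m+3) := by
    rw [← VpAB (2*m+3)]; ring_nf
  rw [show (2*m+2+1) = 2*m+3 from rfl, hBe]
  simp only [map_sub]
  rw [coeff_Vp _ _ (by omega), coeff_Al_pow _ _ (by omega)]
  ring

lemma Ss3 : Ss^3 = Ss - C 4 * (X * Ss) := by
  rw [show (3:ℕ) = 1 + 2 from rfl, pow_add, pow_one, hS2, map_ofNat]; ring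

lemma coeffSs3 (n : ℕ) : coeff (n+2) (Ss^3 : PowerSeries ℚ) = -2 * catalan (n+1) + 8 * catalan n := by
  rw [Ss3, map_sub, coeffC_mul, show n+2 = (n+1)+1 from rfl, coeff_succ_X_mul, coeffSs, coeffSs]
  ring

lemma clem : ∀ m, coeff (m+2) (Ss^3 * Up (2*m)) =
    if m = 0 then 6 else if m = 1 then -2 else 0 := by
  intro m
  match m with
  | 0 =>
    norm_num
    rw [Up0, mul_one, show (2:ℕ) = 0+2 from rfl, coeffSs3]
    norm_num [catalan_one, catalan_two]
  | 1 =>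
    norm_num
    rw [Up2, show Ss^3 * (1 - X) = Ss^3 - X * Ss^3 from by ring,
      map_sub, show (3:ℕ) = 1+2 from rfl, coeffSs3,
      show (1:ℕ)+2 = (1+1)+1 from rfl, coeff_succ_X_mul, show (1:ℕ)+1 = 0+2 from rfl, coeffSs3]
    norm_num [catalan_one, catalan_two]
  | (k+2) =>
    norm_num [show k+2 ≠ 0 from by omega, show k+2 ≠ 1 from by omega]
    have h : Ss^3 * Up (2*(k+2)) = Ss * ((1-4*X) * Up (2*k+2+2)) := by
      rw [Ss3, show 2*(k+2) = 2*k+2+2 from by omega, map_ofNat]; ring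
    rw [h, Urec4 (2*k+2)]
    rw [show Ss * (Up (2*k+2+4) - 2*X*Up (2*k+2+2) + X^2 * Up (2*k+2)) =
      Ss * Up (2*(k+2)+2) - (X * (Ss * Up (2*(k+1)+2)) + X * (Ss * Up (2*(k+1)+2)))
      + X^2 * (Ss * Up (2*k+2)) from by
        rw [show 2*k+2+4 = 2*(k+2)+2 from by omega, show 2*k+2+2 = 2*(k+1)+2 from by omega]
        ring]
    simp only [map_sub, map_add]
    rw [show k+2+2 = (k+2)+2 from rfl, wlem (k+2)]
    rw [show (k+2)+2 = (k+3)+1 from by omega, coeff_succ_X_mul,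
      show k+3 = (k+1)+2 from by omega, wlem (k+1)]
    rw [show (k+1)+2+1 = k+2+2 from by omega]
    have h2 : coeff (k+2+2) (X^2 * (Ss * Up (2*k+2))) = coeff (k+2) (Ss * Up (2*k+2)) := by
      rw [show k+2+2 = (k+2)+2 from rfl]
      exact coeff_X_pow_mul _ 2 (k+2)
    rw [h2, wlem k]
    ring

/-! ### Product expansion for `U` -/

lemma Umul : ∀ n m, Up (m + n) * Up n = ∑ j ∈ range (n+1), X^(n-j) * Up (m + 2*j) := by
  have key : ∀ n, (∀ m, Up (m + n) * Up n = ∑ j ∈ range (n+1), X^(n-j) * Up (m + 2*j)) ∧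
      (∀ m, Up (m + (n+1)) * Up (n+1) = ∑ j ∈ range (n+2), X^(n+1-j) * Up (m + 2*j)) := by
    intro n
    induction n with
    | zero =>
      constructor
      · intro m; simp [Up0]
      · intro m
        rw [Up1, Finset.sum_range_succ, Finset.sum_range_one]
        have h : Up (m + 2*1) = Up (m+1) - X * Up m := by
          have := UpS m; rw [show m + 2*1 = m + 2 from by omega, this]
        rw [h]
        simp only [Nat.sub_self, pow_zero, mul_one, Nat.sub_zero, pow_one, mul_zero, add_zero]
        ring
    | succ n ih =>
      refine ⟨ih.2, ?_⟩
      intro m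
      show Up (m + (n+2)) * Up (n+2) = ∑ j ∈ range (n+3), X^(n+2-j) * Up (m + 2*j)
      rw [UpS n, mul_sub]
      rw [show m + (n+2) = m+1 + (n+1) from by omega]
      rw [ih.2 (m+1)]
      rw [show m+1+(n+1) = m+2+n from by omega]
      rw [show Up (m+2+n) * (X * Up n) = X * (Up (m+2+n) * Up n) from by ring, ih.1 (m+2)]
      have expand : ∀ j ∈ range (n+2), X^(n+1-j) * Up (m+1 + 2*j)
          = X^(n+1-j) * Up (m + 2*j + 2) + X^(n+2-j) * Up (m + 2*j) := by
        intro j hj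
        rw [mem_range] at hj
        have r : Up (m + 2*j + 2) = Up (m + 2*j + 1) - X * Up (m + 2*j) := UpS (m + 2*j)
        have hx : (X : PowerSeries ℚ)^(n+2-j) = X^(n+1-j) * X := by
          rw [← pow_succ]; congr 1; omega
        rw [show m+1+2*j = m+2*j+1 from by omega, r, hx]; ring
      rw [Finset.sum_congr rfl expand, Finset.sum_add_distrib, Finset.mul_sum]
      have shift : ∀ j ∈ range (n+1), X * (X^(n-j) * Up (m+2 + 2*j))
          = X^(n+1-j) * Up (m + 2*j + 2) := by
        intro j hj
        rw [mem_range] at hj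
        have hx : (X : PowerSeries ℚ)^(n+1-j) = X^(n-j) * X := by
          rw [← pow_succ]; congr 1; omega
        rw [show m+2+2*j = m+2*j+2 from by omega, hx]; ring
      rw [Finset.sum_congr rfl shift]
      rw [Finset.sum_range_succ (fun j => X^(n+1-j) * Up (m + 2*j + 2)) (n+1)]
      rw [Finset.sum_range_succ (fun j => X^(n+2-j) * Up (m + 2*j)) (n+2)]
      simp only [Nat.sub_self, pow_zero, one_mul]
      rw [show m + 2*(n+1) + 2 = m + 2*(n+2) from by omega]
      ring
  exact fun n => (key n).1

/-! ### The two-variable pairing -/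

lemma sum_g (N u : ℕ) : (∑ j ∈ range N, if u+j = 0 then (6:ℚ) else if u+j = 1 then -2 else 0)
    = if u = 0 ∧ 2 ≤ N then 4 else if u = 0 ∧ N = 1 then 6 else if u = 1 ∧ 1 ≤ N then -2 else 0 := by
  induction N with
  | zero => simp
  | succ N ih =>
    rw [Finset.sum_range_succ, ih]
    split_ifs <;> try (exfalso; omega)
    all_goals norm_num

lemma Blem' (t a b : ℕ) (hb : b ≤ a) (hab : a + b = 2*t) :
    coeff (t+2) (Ss^3 * (Up a * Up b)) =
    if a = b then (if a = 0 then 6 else 4) else if a = b+2 then -2 else 0 := by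
  have ha : a = (a - b) + b := by omega
  rw [ha, Umul b (a-b), Finset.mul_sum, map_sum]
  have hterm : ∀ j ∈ range (b+1), coeff (t+2) (Ss^3 * (X^(b-j) * Up ((a-b) + 2*j)))
      = if (t-b)+j = 0 then (6:ℚ) else if (t-b)+j = 1 then -2 else 0 := by
    intro j hj
    rw [mem_range] at hj
    have hbt : b ≤ t := by omega
    rw [show Ss^3 * (X^(b-j) * Up ((a-b) + 2*j)) = X^(b-j) * (Ss^3 * Up ((a-b)+2*j)) from by ring]
    rw [coeff_X_pow_mul']
    rw [if_pos (show b - j ≤ t+2 from by omega)]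
    rw [show t+2-(b-j) = ((t-b)+j)+2 from by omega,
        show (a-b) + 2*j = 2*((t-b)+j) from by omega]
    exact clem _
  rw [Finset.sum_congr rfl hterm, sum_g]
  split_ifs <;> first | rfl | (exfalso; omega)

lemma Blem (t a b : ℕ) (hab : a + b = 2*t) :
    coeff (t+2) (Ss^3 * (Up a * Up b)) =
    if a = b then (if a = 0 then 6 else 4) else if (a = b+2 ∨ b = a+2) then -2 else 0 := by
  rcases le_total b a with h | h
  · rw [Blem' t a b h hab]
    split_ifs <;> first | rfl | (exfalso; omega)
  · rw [mul_comm (Up a), Blem' t b a h (by omega)]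
    split_ifs <;> first | rfl | (exfalso; omega)

/-! ### Counting lemmas -/

lemma cnt1 (N A B : ℕ) (c : ℚ) : (∑ k ∈ range (N+1), if A = B + 2*k then c else 0)
    = if (B ≤ A ∧ 2 ∣ A - B ∧ A ≤ B + 2*N) then c else 0 := by
  induction N with
  | zero =>
    simp only [zero_add, Finset.sum_range_one, mul_zero, add_zero]
    split_ifs <;> first | rfl | omega
  | succ N ih =>
    rw [Finset.sum_range_succ, ih]
    split_ifs <;> try (exfalso; omega)
    all_goals ring

def cntN (M N A B : ℕ) : ℕ :=
  if 2 ∣ A+B then min (min (M+1) (N+1)) (min ((B+2*N+2-A)/2) ((A+2*M+2-B)/2)) else 0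

set_option maxHeartbeats 1600000 in
lemma countQ (M N A B : ℕ) (c : ℚ) :
    (∑ j ∈ range (M+1), ∑ k ∈ range (N+1), if A + 2*j = B + 2*k then c else 0)
    = (cntN M N A B : ℚ) * c := by
  induction M with
  | zero =>
    rw [Finset.sum_range_one, cnt1]
    by_cases hC : (B ≤ A + 2*0 ∧ 2 ∣ (A + 2*0) - B ∧ A + 2*0 ≤ B + 2*N)
    · rw [if_pos hC]
      have h1 : cntN 0 N A B = 1 := by unfold cntN; split_ifs <;> omega
      rw [h1]; norm_num
    · rw [if_neg hC]
      have h1 : cntN 0 N A B = 0 := by unfold cntN; split_ifs <;> omega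
      rw [h1]; norm_num
  | succ M ih =>
    rw [Finset.sum_range_succ, ih, cnt1]
    by_cases hC : (B ≤ A + 2*(M+1) ∧ 2 ∣ (A + 2*(M+1)) - B ∧ A + 2*(M+1) ≤ B + 2*N)
    · rw [if_pos hC]
      have h1 : cntN (M+1) N A B = cntN M N A B + 1 := by unfold cntN; split_ifs <;> omega
      rw [h1]; push_cast; ring
    · rw [if_neg hC]
      have h1 : cntN (M+1) N A B = cntN M N A B := by unfold cntN; split_ifs <;> omega
      rw [h1]; ring

lemma sumIte00 (M N : ℕ) (P : Prop) [Decidable P] (c : ℚ) :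
    (∑ j ∈ range (M+1), ∑ k ∈ range (N+1), if j = 0 ∧ k = 0 ∧ P then c else 0)
    = if P then c else 0 := by
  have hpt : ∀ j k : ℕ, (if j = 0 ∧ k = 0 ∧ P then c else 0)
      = if j = 0 then (if k = 0 then (if P then c else 0) else 0) else 0 := by
    intro j k; split_ifs <;> tauto
  simp only [hpt]
  have inner : ∀ j ∈ range (M+1), (∑ k ∈ range (N+1),
      if j = 0 then (if k = 0 then (if P then c else 0) else 0) else 0)
      = if j = 0 then (if P then c else 0) else 0 := by
    intro j _
    by_cases hj : j = 0
    · simp only [hj, if_true]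
      rw [Finset.sum_ite_eq' (range (N+1)) (0:ℕ) (fun _ => if P then c else 0)]
      simp
    · simp [hj]
  rw [Finset.sum_congr rfl inner,
    Finset.sum_ite_eq' (range (M+1)) (0:ℕ) (fun _ => if P then c else 0)]
  simp

set_option maxHeartbeats 16000000 in
lemma case5key (n1 n2 n3 n4 : ℕ) (h12 : n2 ≤ n1) (h23 : n3 ≤ n2) (h34 : n4 ≤ n3)
    (hpar : 2 ∣ (n1+n2+n3+n4))
    (hB : ¬(n1 = n2 ∧ n3 = n4)) (hC : ¬(n1+n4 = n2+n3 ∧ n1 ≠ n2)) (hD : ¬ n1 = n2+n3+n4+2) :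
    4 * cntN n2 n4 (n1+n4) (n2+n3)
      = 2 * cntN n2 n4 (n1+n4) (n2+n3+2) + 2 * cntN n2 n4 (n1+n4+2) (n2+n3) := by
  have d1 : 2 ∣ (n1+n4)+(n2+n3) := by omega
  have d2 : 2 ∣ (n1+n4)+(n2+n3+2) := by omega
  have d3 : 2 ∣ (n1+n4+2)+(n2+n3) := by omega
  unfold cntN
  rw [if_pos d1, if_pos d2, if_pos d3]
  omega

set_option maxHeartbeats 2000000 in
lemma finalcount (n1 n2 n3 n4 : ℕ) (h12 : n2 ≤ n1) (h23 : n3 ≤ n2) (h34 : n4 ≤ n3)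
    (hpar : 2 ∣ (n1+n2+n3+n4)) :
    (∑ j ∈ range (n2+1), ∑ k ∈ range (n4+1),
       (if n1-n2+2*j = n3-n4+2*k then (if n1-n2+2*j = 0 then (6:ℚ) else 4)
        else if (n1-n2+2*j = (n3-n4+2*k)+2 ∨ n3-n4+2*k = (n1-n2+2*j)+2) then -2 else 0))
    = if n1 = n2 ∧ n2 = n3 ∧ n3 = n4 then (6:ℚ) else if n1 = n2 ∧ n3 = n4 then 4
      else if n1+n4 = n2+n3 ∧ n1 ≠ n2 then 2 else if n1 = n2+n3+n4+2 then -2 else 0 := by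
  have hpt : ∀ j k : ℕ,
      (if n1-n2+2*j = n3-n4+2*k then (if n1-n2+2*j = 0 then (6:ℚ) else 4)
        else if (n1-n2+2*j = (n3-n4+2*k)+2 ∨ n3-n4+2*k = (n1-n2+2*j)+2) then -2 else 0)
      = (if (n1+n4) + 2*j = (n2+n3) + 2*k then (4:ℚ) else 0)
        + (if j = 0 ∧ k = 0 ∧ (n1 = n2 ∧ n3 = n4) then 2 else 0)
        + (if (n1+n4) + 2*j = (n2+n3+2) + 2*k then (-2:ℚ) else 0)
        + (if (n1+n4+2) + 2*j = (n2+n3) + 2*k then (-2:ℚ) else 0) := by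
    intro j k
    split_ifs <;> try (exfalso; omega)
    all_goals norm_num
  simp only [hpt, Finset.sum_add_distrib]
  rw [countQ n2 n4 (n1+n4) (n2+n3) 4, countQ n2 n4 (n1+n4) (n2+n3+2) (-2),
    countQ n2 n4 (n1+n4+2) (n2+n3) (-2), sumIte00]
  by_cases hA : n1 = n2 ∧ n2 = n3 ∧ n3 = n4
  · rw [if_pos hA, if_pos (show n1 = n2 ∧ n3 = n4 from ⟨hA.1, hA.2.2⟩)]
    have e1 : cntN n2 n4 (n1+n4) (n2+n3) = n4+1 := by unfold cntN; split_ifs <;> omega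
    have e2 : cntN n2 n4 (n1+n4) (n2+n3+2) = n4 := by unfold cntN; split_ifs <;> omega
    have e3 : cntN n2 n4 (n1+n4+2) (n2+n3) = n4 := by unfold cntN; split_ifs <;> omega
    rw [e1, e2, e3]; push_cast; ring
  · rw [if_neg hA]
    by_cases hB : n1 = n2 ∧ n3 = n4
    · rw [if_pos hB, if_pos hB]
      have e1 : cntN n2 n4 (n1+n4) (n2+n3) = n4+1 := by unfold cntN; split_ifs <;> omega
      have e2 : cntN n2 n4 (n1+n4) (n2+n3+2) = n4+1 := by unfold cntN; split_ifs <;> omega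
      have e3 : cntN n2 n4 (n1+n4+2) (n2+n3) = n4 := by unfold cntN; split_ifs <;> omega
      rw [e1, e2, e3]; push_cast; ring
    · rw [if_neg hB, if_neg hB]
      by_cases hC : n1+n4 = n2+n3 ∧ n1 ≠ n2
      · rw [if_pos hC]
        have e1 : cntN n2 n4 (n1+n4) (n2+n3) = n4+1 := by unfold cntN; split_ifs <;> omega
        have e2 : cntN n2 n4 (n1+n4) (n2+n3+2) = n4+1 := by unfold cntN; split_ifs <;> omega
        have e3 : cntN n2 n4 (n1+n4+2) (n2+n3) = n4 := by unfold cntN; split_ifs <;> omega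
        rw [e1, e2, e3]; push_cast; ring
      · rw [if_neg hC]
        by_cases hD : n1 = n2+n3+n4+2
        · rw [if_pos hD]
          have e1 : cntN n2 n4 (n1+n4) (n2+n3) = 0 := by unfold cntN; split_ifs <;> omega
          have e2 : cntN n2 n4 (n1+n4) (n2+n3+2) = 1 := by unfold cntN; split_ifs <;> omega
          have e3 : cntN n2 n4 (n1+n4+2) (n2+n3) = 0 := by unfold cntN; split_ifs <;> omega
          rw [e1, e2, e3]; push_cast; ring
        · rw [if_neg hD]
          have key := case5key n1 n2 n3 n4 h12 h23 h34 hpar hB hC hD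
          have keyQ : 4 * (cntN n2 n4 (n1+n4) (n2+n3) : ℚ)
              = 2 * (cntN n2 n4 (n1+n4) (n2+n3+2) : ℚ)
                + 2 * (cntN n2 n4 (n1+n4+2) (n2+n3) : ℚ) := by
            exact_mod_cast congrArg (Nat.cast (R := ℚ)) key
          linarith [keyQ]

/-! ### Main theorem -/

set_option maxHeartbeats 1000000 in
/-- Lemma 4.13 in generating-function form: for `d ≥ 2` and
`n_1 ≥ n_2 ≥ n_3 ≥ n_4 ≥ 0` with `n_1+n_2+n_3+n_4 = 2d−4`, the coefficient of `q^d` in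
`(1−4q)·(1−2q·F(q))·U_{n_1}·U_{n_2}·U_{n_3}·U_{n_4}`, i.e. the intersection number
`∫_{Gr(2,d+1)} σ_{n_1}σ_{n_2}σ_{n_3}σ_{n_4}(8σ_{11} − 2σ_1²)`, is given by the case values
`6, 4, 2, −2, 0`. -/
theorem integral_against_magic_class (d n1 n2 n3 n4 : ℕ) (hd : 2 ≤ d)
    (h12 : n2 ≤ n1) (h23 : n3 ≤ n2) (h34 : n4 ≤ n3)
    (hsum : n1 + n2 + n3 + n4 = 2 * d - 4) :
    PowerSeries.coeff d
        ((1 - 4 * PowerSeries.X) * (1 - 2 * PowerSeries.X * catalanGF) *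
          ((U n1 : Polynomial ℚ) : PowerSeries ℚ) * ((U n2 : Polynomial ℚ) : PowerSeries ℚ) *
          ((U n3 : Polynomial ℚ) : PowerSeries ℚ) * ((U n4 : Polynomial ℚ) : PowerSeries ℚ)) =
      if n1 = n2 ∧ n2 = n3 ∧ n3 = n4 then (6 : ℚ)
      else if n1 = n2 ∧ n3 = n4 then 4
      else if n1 + n4 = n2 + n3 ∧ n1 ≠ n2 then 2
      else if n1 = n2 + n3 + n4 + 2 then -2
      else 0 := by
  have hsum' : n1 + n2 + n3 + n4 + 4 = 2 * d := by omega
  have hpar : 2 ∣ (n1+n2+n3+n4) := by omega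
  rw [Updef, Updef, Updef, Updef]
  have hser : (1 - 4 * PowerSeries.X) * (1 - 2 * PowerSeries.X * catalanGF) *
      Up n1 * Up n2 * Up n3 * Up n4
      = Ss^3 * ((Up n1 * Up n2) * (Up n3 * Up n4)) := by
    have : (1 - 4 * (X : PowerSeries ℚ)) = Ss^2 := hS2.symm
    rw [this, show (1 - 2 * (X : PowerSeries ℚ) * catalanGF) = Ss from rfl]
    ring
  rw [hser]
  have h1 : Up n1 * Up n2 = ∑ j ∈ range (n2+1), X^(n2-j) * Up ((n1-n2) + 2*j) := by
    have := Umul n2 (n1-n2)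
    rw [show n1-n2+n2 = n1 from by omega] at this
    exact this
  have h2 : Up n3 * Up n4 = ∑ k ∈ range (n4+1), X^(n4-k) * Up ((n3-n4) + 2*k) := by
    have := Umul n4 (n3-n4)
    rw [show n3-n4+n4 = n3 from by omega] at this
    exact this
  rw [h1, h2, Finset.sum_mul_sum, Finset.mul_sum]
  simp only [Finset.mul_sum]
  simp only [map_sum]
  have hterm : ∀ j ∈ range (n2+1), (∑ k ∈ range (n4+1), coeff d
        (Ss^3 * (X^(n2-j) * Up ((n1-n2) + 2*j) * (X^(n4-k) * Up ((n3-n4) + 2*k)))))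
      = ∑ k ∈ range (n4+1),
       (if n1-n2+2*j = n3-n4+2*k then (if n1-n2+2*j = 0 then (6:ℚ) else 4)
        else if (n1-n2+2*j = (n3-n4+2*k)+2 ∨ n3-n4+2*k = (n1-n2+2*j)+2) then -2 else 0) := by
    intro j hj
    rw [mem_range] at hj
    apply Finset.sum_congr rfl
    intro k hk
    rw [mem_range] at hk
    have hex : Ss^3 * (X^(n2-j) * Up ((n1-n2) + 2*j) * (X^(n4-k) * Up ((n3-n4) + 2*k)))
        = X^((n2-j)+(n4-k)) * (Ss^3 * (Up ((n1-n2) + 2*j) * Up ((n3-n4) + 2*k))) := by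
      rw [pow_add]; ring
    rw [hex, coeff_X_pow_mul']
    have hle : (n2-j)+(n4-k) ≤ d := by omega
    rw [if_pos hle]
    have ht : d - ((n2-j)+(n4-k)) = (d - 2 - ((n2-j)+(n4-k))) + 2 := by omega
    rw [ht, Blem (d - 2 - ((n2-j)+(n4-k))) _ _ (by omega)]
  rw [Finset.sum_congr rfl hterm]
  exact finalcount n1 n2 n3 n4 h12 h23 h34 hpar
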